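/- Let X be a finite-dimensional simplicial complex equipped with the path metric induced by the spherical metric on its simplices. Then the family of barycentric coordinate functions (χ_v)_{v ∈ X⁽⁰⁾}, indexed by the vertices of X, is a partition of unity on X that is (1) uniformly point-wise locally finite with sup_{x ∈ X} |{v : χ_v(x) ≠ 0}| ≤ dim(X) + 1, (2) equicontinuous (for every ε > 0 there is δ > 0 such that d(x,x') ≤ δ implies |χ_v(x) − χ_v(x')| ≤ ε for all vertices v simultaneously), and (3) each support supp(χ_v) is bounded with respect to the entourage U₂ of width 2 (i.e., contained in the ball of radius 2 around v). -/

import Mathlib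

open scoped ENNReal

/-- A point of the geometric realization of the simplicial complex `K` on the vertex set `V`:
barycentric coordinates forming a probability distribution supported on a face of `K`. -/
structure SPoint {V : Type*} (K : Set (Finset V)) where
  f : V →₀ ℝ
  nonneg : ∀ v, 0 ≤ f v
  sum_one : (f.support.sum fun v => f v) = 1
  mem : f.support ∈ K

/-- The spherical distance between two points of a common simplex: map barycentric coordinates
to the unit sphere via coordinatewise square roots and take the round distance. -/
noncomputable def sphDist {V : Type*} [DecidableEq V] {K : Set (Finset V)}
    (x y : SPoint K) : ℝ :=
  Real.arccos ((x.f.support ∪ y.f.support).sum fun v => Real.sqrt (x.f v) * Real.sqrt (y.f v))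

/-- The spherical path (quasi-)metric on the realization of `K`: the infimum of lengths of
chains whose consecutive members lie in a common simplex. -/
noncomputable def pathDist {V : Type*} [DecidableEq V] {K : Set (Finset V)}
    (x y : SPoint K) : ℝ≥0∞ :=
  sInf { L | ∃ (k : ℕ) (c : ℕ → SPoint K), c 0 = x ∧ c k = y ∧
    (∀ i < k, ((c i).f.support ∪ (c (i + 1)).f.support) ∈ K) ∧
    L = ∑ i ∈ Finset.range k, ENNReal.ofReal (sphDist (c i) (c (i + 1))) }

/-- The vertex `v` regarded as a point of the realization. -/
noncomputable def vertexPoint {V : Type*} [DecidableEq V] {K : Set (Finset V)} (v : V)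
    (hv : ({v} : Finset V) ∈ K) : SPoint K where
  f := Finsupp.single v 1
  nonneg := fun w => by
    rw [Finsupp.single_apply]
    split <;> norm_num
  sum_one := by
    rw [Finsupp.support_single_ne_zero v one_ne_zero]
    simp
  mem := by
    rw [Finsupp.support_single_ne_zero v one_ne_zero]
    exact hv


-- sum over a superset of support
lemma sum_over_union {V : Type*} [DecidableEq V] {K : Set (Finset V)} (x : SPoint K)
    (s : Finset V) (h : x.f.support ⊆ s) : (s.sum fun v => x.f v) = 1 := by
  rw [← x.sum_one]
  exact (Finset.sum_subset h (fun v _ hv => Finsupp.notMem_support_iff.mp hv)).symm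

lemma coord_le_one {V : Type*} [DecidableEq V] {K : Set (Finset V)} (x : SPoint K) (v : V) :
    x.f v ≤ 1 := by
  by_cases h : x.f v = 0
  · simp [h]
  · rw [← x.sum_one]
    exact Finset.single_le_sum (fun w _ => x.nonneg w) (Finsupp.mem_support_iff.mpr h)

lemma key {V : Type*} [DecidableEq V] {K : Set (Finset V)} (x y : SPoint K) (v : V) :
    |x.f v - y.f v| ≤ 2 * sphDist x y := by
  set u := x.f.support ∪ y.f.support with hu
  set s : ℝ := u.sum fun w => Real.sqrt (x.f w) * Real.sqrt (y.f w) with hs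
  have hxsum : (u.sum fun w => x.f w) = 1 := sum_over_union x u Finset.subset_union_left
  have hysum : (u.sum fun w => y.f w) = 1 := sum_over_union y u Finset.subset_union_right
  have hs0 : 0 ≤ s := Finset.sum_nonneg fun w _ =>
    mul_nonneg (Real.sqrt_nonneg _) (Real.sqrt_nonneg _)
  have hs1 : s ≤ 1 := by
    have := Finset.sum_sq_le_sum_mul_sum_of_sq_eq_mul u
      (r := fun w => Real.sqrt (x.f w) * Real.sqrt (y.f w))
      (f := fun w => x.f w) (g := fun w => y.f w)
      (fun w _ => x.nonneg w) (fun w _ => y.nonneg w)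
      (fun w _ => by
        rw [mul_pow, Real.sq_sqrt (x.nonneg w), Real.sq_sqrt (y.nonneg w)])
    rw [hxsum, hysum, mul_one] at this
    nlinarith [this]
  have hsq : (u.sum fun w => (Real.sqrt (x.f w) - Real.sqrt (y.f w))^2) = 2 - 2*s := by
    have : ∀ w, (Real.sqrt (x.f w) - Real.sqrt (y.f w))^2
        = x.f w + y.f w - 2 * (Real.sqrt (x.f w) * Real.sqrt (y.f w)) := by
      intro w
      have hx := Real.sq_sqrt (x.nonneg w)
      have hy := Real.sq_sqrt (y.nonneg w)
      ring_nf
      nlinarith [hx, hy]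
    simp_rw [this]
    rw [Finset.sum_sub_distrib, Finset.sum_add_distrib, hxsum, hysum, ← Finset.mul_sum, ← hs]
    ring
  -- chord-arc
  have harc : Real.sqrt (2 - 2*s) ≤ sphDist x y := by
    have hθ : Real.cos (sphDist x y) = s := Real.cos_arccos (by linarith) hs1
    have hθ0 : 0 ≤ sphDist x y := Real.arccos_nonneg _
    have hb := Real.one_sub_sq_div_two_le_cos (x := sphDist x y)
    rw [hθ] at hb
    have : 2 - 2*s ≤ (sphDist x y)^2 := by nlinarith
    calc Real.sqrt (2 - 2*s) ≤ Real.sqrt ((sphDist x y)^2) := Real.sqrt_le_sqrt this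
    _ = sphDist x y := Real.sqrt_sq hθ0
  have hd0 : 0 ≤ sphDist x y := Real.arccos_nonneg _
  by_cases hv : v ∈ u
  · have hterm : (Real.sqrt (x.f v) - Real.sqrt (y.f v))^2 ≤ 2 - 2*s := by
      rw [← hsq]
      exact Finset.single_le_sum (f := fun w => (Real.sqrt (x.f w) - Real.sqrt (y.f w))^2) (fun w _ => sq_nonneg _) hv
    have h1 : |Real.sqrt (x.f v) - Real.sqrt (y.f v)| ≤ Real.sqrt (2 - 2*s) := by
      rw [← Real.sqrt_sq_eq_abs]
      exact Real.sqrt_le_sqrt hterm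
    have hfact : x.f v - y.f v
        = (Real.sqrt (x.f v) - Real.sqrt (y.f v)) * (Real.sqrt (x.f v) + Real.sqrt (y.f v)) := by
      have hx := Real.sq_sqrt (x.nonneg v)
      have hy := Real.sq_sqrt (y.nonneg v)
      nlinarith
    have hsum2 : Real.sqrt (x.f v) + Real.sqrt (y.f v) ≤ 2 := by
      have h1 : Real.sqrt (x.f v) ≤ 1 := by
        rw [show (1:ℝ) = Real.sqrt 1 by simp]
        exact Real.sqrt_le_sqrt (coord_le_one x v)
      have h2 : Real.sqrt (y.f v) ≤ 1 := by
        rw [show (1:ℝ) = Real.sqrt 1 by simp]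
        exact Real.sqrt_le_sqrt (coord_le_one y v)
      linarith
    calc |x.f v - y.f v|
        = |Real.sqrt (x.f v) - Real.sqrt (y.f v)| * (Real.sqrt (x.f v) + Real.sqrt (y.f v)) := by
          rw [hfact, abs_mul]; congr 1; exact abs_of_nonneg (by positivity)
      _ ≤ Real.sqrt (2 - 2*s) * 2 := by
          apply mul_le_mul h1 hsum2 (by positivity) (Real.sqrt_nonneg _)
      _ ≤ 2 * sphDist x y := by linarith
  · have hx0 : x.f v = 0 := Finsupp.notMem_support_iff.mp fun h => hv (Finset.mem_union_left _ h)
    have hy0 : y.f v = 0 := Finsupp.notMem_support_iff.mp fun h => hv (Finset.mem_union_right _ h)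
    rw [hx0, hy0]
    simpa using by linarith

/-- For a finite-dimensional simplicial complex with the spherical path metric, the barycentric
coordinate functions form a partition of unity which is uniformly point-wise locally finite
(with bound `dim + 1`), equicontinuous, and has supports of `U₂`-bounded size (each contained
in the ball of radius `2` around the corresponding vertex). -/
theorem stmt4 {V : Type*} [DecidableEq V] (K : Set (Finset V)) (n : ℕ)
    (hdown : ∀ s ∈ K, ∀ t : Finset V, t ⊆ s → t.Nonempty → t ∈ K)
    (hsing : ∀ v : V, (∃ s ∈ K, v ∈ s) → ({v} : Finset V) ∈ K)
    (hdim : ∀ s ∈ K, s.card ≤ n + 1) :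
    (∀ x : SPoint K,
      (x.f.support.sum fun v => x.f v) = 1 ∧ x.f.support.card ≤ n + 1) ∧
    (∀ ε : ℝ, 0 < ε → ∃ δ : ℝ, 0 < δ ∧ ∀ x y : SPoint K,
      pathDist x y ≤ ENNReal.ofReal δ → ∀ v : V, |x.f v - y.f v| ≤ ε) ∧
    (∀ (v : V) (hv : ({v} : Finset V) ∈ K) (x : SPoint K), x.f v ≠ 0 →
      pathDist x (vertexPoint v hv) ≤ ENNReal.ofReal 2) := by
  refine ⟨fun x => ⟨x.sum_one, hdim _ x.mem⟩, ?_, ?_⟩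
  · -- equicontinuity
    intro ε hε
    refine ⟨ε/4, by linarith, fun x y hxy v => ?_⟩
    have hlt : pathDist x y < ENNReal.ofReal (ε/2) :=
      lt_of_le_of_lt hxy (ENNReal.ofReal_lt_ofReal_iff (by linarith) |>.mpr (by linarith))
    obtain ⟨L, hLmem, hL⟩ := sInf_lt_iff.mp hlt
    obtain ⟨k, c, hc0, hck, -, rfl⟩ := hLmem
    set T : ℝ := ∑ i ∈ Finset.range k, sphDist (c i) (c (i+1)) with hT
    have hTeq : (∑ i ∈ Finset.range k, ENNReal.ofReal (sphDist (c i) (c (i+1))))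
        = ENNReal.ofReal T := by
      rw [hT, ENNReal.ofReal_sum_of_nonneg]
      intro i _
      exact Real.arccos_nonneg _
    rw [hTeq] at hL
    have hT0 : 0 ≤ T := Finset.sum_nonneg fun i _ => Real.arccos_nonneg _
    have hTlt : T < ε/2 := by
      rwa [ENNReal.ofReal_lt_ofReal_iff_of_nonneg hT0] at hL
    have htel : x.f v - y.f v = ∑ i ∈ Finset.range k, ((c i).f v - (c (i+1)).f v) := by
      rw [Finset.sum_range_sub' (fun i => (c i).f v), hc0, hck]
    calc |x.f v - y.f v| = |∑ i ∈ Finset.range k, ((c i).f v - (c (i+1)).f v)| := by rw [htel]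
      _ ≤ ∑ i ∈ Finset.range k, |(c i).f v - (c (i+1)).f v| := Finset.abs_sum_le_sum_abs _ _
      _ ≤ ∑ i ∈ Finset.range k, 2 * sphDist (c i) (c (i+1)) :=
          Finset.sum_le_sum fun i _ => key (c i) (c (i+1)) v
      _ = 2 * T := by rw [hT, Finset.mul_sum]
      _ ≤ ε := by linarith
  · -- bounded supports
    intro v hv x hx
    have hvsupp : v ∈ x.f.support := Finsupp.mem_support_iff.mpr hx
    have hvpsupp : (vertexPoint v hv).f.support = {v} := by
      show (Finsupp.single v (1:ℝ)).support = {v}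
      exact Finsupp.support_single_ne_zero v one_ne_zero
    have hmem : ENNReal.ofReal (sphDist x (vertexPoint v hv)) ∈
        { L | ∃ (k : ℕ) (c : ℕ → SPoint K), c 0 = x ∧ c k = (vertexPoint v hv) ∧
          (∀ i < k, ((c i).f.support ∪ (c (i + 1)).f.support) ∈ K) ∧
          L = ∑ i ∈ Finset.range k, ENNReal.ofReal (sphDist (c i) (c (i + 1))) } := by
      refine ⟨1, fun i => if i = 0 then x else vertexPoint v hv, by simp, by simp, ?_, by simp⟩
      intro i hi
      interval_cases i
      norm_num [hvpsupp]
      rw [Finset.insert_eq_of_mem hvsupp]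
      exact x.mem
    refine le_trans (sInf_le hmem) (ENNReal.ofReal_le_ofReal ?_)
    unfold sphDist
    have h0 : 0 ≤ ((x.f.support ∪ (vertexPoint v hv).f.support).sum
        fun w => Real.sqrt (x.f w) * Real.sqrt ((vertexPoint v hv).f w)) :=
      Finset.sum_nonneg fun w _ => mul_nonneg (Real.sqrt_nonneg _) (Real.sqrt_nonneg _)
    have := Real.arccos_le_pi_div_two.mpr h0
    have hpi := Real.pi_le_four
    linarith
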